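/- Let φ : ℝ → ℝ be an even Schwartz function whose Fourier transform φ̂ is supported in [−1,1]. Then for every t > 0 and every λ ∈ [0,4], Σ_{n∈ℤ} φ((arccos(1 − λ/2) − 2πn)·t) = Σ_{k∈ℤ, |k|≤t} t^{−1} φ̂(k/t) · T_k(1 − λ/2), where T_k is the Chebyshev polynomial of the first kind. In particular, the function W*_t(λ) := Σ_{n∈ℤ} φ((arccos(1 − λ/2) − 2πn)·t) is the restriction to [0,4] of a polynomial in λ of degree at most ⌊t⌋. -/

import Mathlib

open MeasureTheory Real

/-- The Fourier transform with the convention `φ̂(k) = (2π)⁻¹ ∫ φ(x) e^{−i k x} dx`. -/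
noncomputable def fourierHat (f : ℝ → ℝ) (k : ℝ) : ℂ :=
  (2 * Real.pi : ℂ)⁻¹ * ∫ x : ℝ, (f x : ℂ) * Complex.exp (-(Complex.I * k * x))

open Filter Asymptotics Polynomial in
lemma chebyshev_natDegree_le (n : ℤ) :
    (Polynomial.Chebyshev.T ℝ n).natDegree ≤ n.natAbs := by
  have key : ∀ m : ℕ, (Polynomial.Chebyshev.T ℝ (m : ℤ)).natDegree ≤ m := by
    intro m
    induction m using Nat.strong_induction_on with
    | _ m ih =>
      match m with
      | 0 => simp [Polynomial.Chebyshev.T_zero]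
      | 1 => simp [Polynomial.Chebyshev.T_one]
      | (k+2) =>
        have h1 := ih k (by omega)
        have h2 := ih (k+1) (by omega)
        rw [show ((k+2 : ℕ) : ℤ) = (k:ℤ) + 2 by push_cast; ring,
          Polynomial.Chebyshev.T_add_two]
        refine le_trans (Polynomial.natDegree_sub_le _ _) (max_le ?_ ?_)
        · refine le_trans (Polynomial.natDegree_mul_le) ?_
          have hX : ((2 : ℝ[X]) * X).natDegree ≤ 1 :=
            le_trans Polynomial.natDegree_mul_le (by simp)
          have : ((k:ℤ) + 1) = ((k+1 : ℕ) : ℤ) := by push_cast; ring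
          rw [this]
          omega
        · rw [show (k:ℤ) = ((k : ℕ) : ℤ) from rfl]
          omega
  rcases Int.natAbs_eq n with h | h
  · rw [h]; exact key _
  · rw [h, Polynomial.Chebyshev.T_neg, Int.natAbs_neg, Int.natAbs_natCast]; exact key _

lemma hat_even (φ : SchwartzMap ℝ ℝ) (hφ_even : ∀ x : ℝ, φ (-x) = φ x) (k : ℝ) :
    fourierHat (fun x => φ x) (-k) = fourierHat (fun x => φ x) k := by
  unfold fourierHat
  congr 1
  have := MeasureTheory.integral_neg_eq_self
    (fun x : ℝ => (φ x : ℂ) * Complex.exp (-(Complex.I * k * x))) volume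
  rw [← this]
  congr 1
  funext x
  rw [hφ_even]
  congr 1
  push_cast
  ring

open Filter Asymptotics in
lemma key_lemma (φ : SchwartzMap ℝ ℝ) (hφ_even : ∀ x : ℝ, φ (-x) = φ x)
    (hhat_supp : ∀ k : ℝ, k ∉ Set.Icc (-1 : ℝ) 1 → fourierHat (fun x => φ x) k = 0)
    (t : ℝ) (ht : 0 < t) (θ : ℝ) :
    ((∑' n : ℤ, φ ((θ - 2 * Real.pi * n) * t) : ℝ) : ℂ)
      = ∑ k ∈ Finset.Icc (-⌊t⌋) ⌊t⌋,
          (t : ℂ)⁻¹ * fourierHat (fun x => φ x) (k / t) * (Real.cos (k * θ) : ℂ) := by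
  have htne : (t : ℝ) ≠ 0 := ne_of_gt ht
  have htC : (t : ℂ) ≠ 0 := by exact_mod_cast htne
  have hπ : (0:ℝ) < π := Real.pi_pos
  have hπC : ((π : ℝ) : ℂ) ≠ 0 := by exact_mod_cast ne_of_gt hπ
  -- the function to which we apply Poisson summation
  set f : ℝ → ℂ := fun x => ((φ ((θ - 2 * π * x) * t) : ℝ) : ℂ) with hf
  -- Fourier transform formula
  have hA : ∀ w : ℝ, FourierTransform.fourier f w
      = (t:ℂ)⁻¹ * Complex.exp (-(Complex.I * w * θ)) *
          fourierHat (fun x => φ x) (-(w/t)) := by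
    intro w
    rw [Real.fourier_real_eq_integral_exp_smul]
    set G : ℝ → ℂ := fun u => (φ u : ℂ) * Complex.exp (Complex.I * ((w*u/t - w*θ : ℝ) : ℂ))
      with hG
    have step1 : (∫ v : ℝ, Complex.exp ((↑(-2 * π * v * w)) * Complex.I) • f v)
        = ∫ v : ℝ, G ((-(2*π*t)) * v + θ * t) := by
      congr 1
      funext v
      have h1 : (-(2*π*t)) * v + θ*t = (θ - 2*π*v)*t := by ring
      simp only [hG, hf, smul_eq_mul]
      rw [h1, mul_comm]
      congr 1
      congr 1
      push_cast
      field_simp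
      ring
    rw [step1]
    have hcv : (∫ v : ℝ, G ((-(2*π*t)) * v + θ * t))
        = |(-(2*π*t))⁻¹| • ∫ u : ℝ, G u := by
      calc (∫ v : ℝ, G ((-(2*π*t)) * v + θ * t))
          = |(-(2*π*t))⁻¹| • ∫ u : ℝ, G (u + θ * t) :=
            MeasureTheory.Measure.integral_comp_mul_left (fun u => G (u + θ * t)) (-(2*π*t))
        _ = |(-(2*π*t))⁻¹| • ∫ u : ℝ, G u := by
            rw [MeasureTheory.integral_add_right_eq_self G (θ * t)]
    rw [hcv]
    have habs : |(-(2*π*t))⁻¹| = (2*π*t)⁻¹ := by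
      rw [abs_inv, abs_neg, abs_of_pos (by positivity)]
    rw [habs]
    have hsplit : G = fun u : ℝ =>
        ((φ u : ℂ) * Complex.exp (-(Complex.I * ((-(w/t) : ℝ) : ℂ) * (u : ℝ))))
          * Complex.exp (-(Complex.I * w * θ)) := by
      funext u
      simp only [hG]
      rw [mul_assoc, ← Complex.exp_add]
      congr 2
      push_cast
      field_simp
      ring
    rw [hsplit, MeasureTheory.integral_mul_const]
    have hhat : (∫ x : ℝ, (φ x : ℂ) * Complex.exp (-(Complex.I * ((-(w/t) : ℝ) : ℂ) * (x : ℝ))))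
        = 2 * (π:ℂ) * fourierHat (fun x => φ x) (-(w/t)) := by
      rw [fourierHat]
      rw [← mul_assoc]
      rw [mul_inv_cancel₀ (by simp [hπC] : (2 * (π:ℝ) : ℂ) ≠ 0), one_mul]
    rw [hhat, Complex.real_smul]
    push_cast
    field_simp
  have hFf : (FourierTransform.fourier f) =O[cocompact ℝ] (fun x : ℝ => |x| ^ (-2 : ℝ)) := by
    have hev : FourierTransform.fourier f =ᶠ[cocompact ℝ] (fun _ => (0:ℂ)) := by
      have h1 : ∀ᶠ w : ℝ in cocompact ℝ, t + 1 ≤ ‖w‖ :=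
        tendsto_norm_cocompact_atTop.eventually_ge_atTop _
      filter_upwards [h1] with w hw
      rw [Real.norm_eq_abs] at hw
      rw [hA w]
      have hmem : -(w/t) ∉ Set.Icc (-1:ℝ) 1 := by
        intro hmem
        rw [Set.mem_Icc] at hmem
        have habs : |w/t| ≤ 1 := abs_le.mpr ⟨by linarith [hmem.2], by linarith [hmem.1]⟩
        rw [abs_div, abs_of_pos ht, div_le_one ht] at habs
        linarith
      rw [hhat_supp _ hmem, mul_zero]
    exact hev.trans_isBigO (isBigO_zero _ _)
  -- decay of f
  have hc : Continuous f := Complex.continuous_ofReal.comp (φ.continuous.comp (by fun_prop))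
  obtain ⟨C, hC0, hC⟩ := φ.decay 2 0
  have hfO : f =O[cocompact ℝ] (fun x : ℝ => |x| ^ (-2 : ℝ)) := by
    rw [isBigO_iff]
    refine ⟨C * ((π*t)⁻¹)^2, ?_⟩
    have hev : ∀ᶠ x : ℝ in cocompact ℝ, max 1 (|θ|/π) ≤ ‖x‖ :=
      tendsto_norm_cocompact_atTop.eventually_ge_atTop _
    filter_upwards [hev] with x hx
    rw [Real.norm_eq_abs] at hx
    have hx1 : 1 ≤ |x| := le_trans (le_max_left _ _) hx
    have hxpos : (0:ℝ) < |x| := lt_of_lt_of_le one_pos hx1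
    have hθ : |θ| ≤ π * |x| := by
      have h' : |θ|/π ≤ |x| := le_trans (le_max_right _ _) hx
      calc |θ| = (|θ|/π) * π := by field_simp
        _ ≤ |x| * π := mul_le_mul_of_nonneg_right h' hπ.le
        _ = π * |x| := mul_comm _ _
    have hAx : π * t * |x| ≤ |(θ - 2*π*x) * t| := by
      rw [abs_mul, abs_of_pos ht]
      have h1 : |2*π*x| - |θ| ≤ |θ - 2*π*x| := by
        rw [abs_sub_comm]; exact abs_sub_abs_le_abs_sub _ _
      rw [abs_mul, abs_of_pos (by positivity : (0:ℝ) < 2*π)] at h1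
      nlinarith
    have hφb : |φ ((θ - 2*π*x)*t)| * (π*t*|x|)^2 ≤ C := by
      have h := hC ((θ - 2*π*x)*t)
      rw [norm_iteratedFDeriv_zero, Real.norm_eq_abs, Real.norm_eq_abs] at h
      have h2 : (π*t*|x|)^2 ≤ |(θ - 2*π*x)*t|^2 := by
        apply pow_le_pow_left₀ (by positivity) hAx
      nlinarith [abs_nonneg (φ ((θ - 2*π*x)*t))]
    have hr : |x| ^ (-2:ℝ) = (|x|^2)⁻¹ := by
      rw [Real.rpow_neg (abs_nonneg x), show (2:ℝ) = ((2:ℕ):ℝ) by norm_num,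
        Real.rpow_natCast]
    have hnorm : ‖f x‖ = |φ ((θ - 2*π*x)*t)| := by
      simp [hf, Complex.norm_real, Real.norm_eq_abs]
    rw [hnorm, Real.norm_eq_abs, hr,
      abs_of_nonneg (by positivity : (0:ℝ) ≤ ((|x|^2)⁻¹ : ℝ))]
    calc |φ ((θ - 2*π*x)*t)| ≤ C / (π*t*|x|)^2 := by
          rw [le_div_iff₀ (by positivity)]; exact hφb
      _ = C * ((π*t)⁻¹)^2 * (|x|^2)⁻¹ := by
          rw [div_eq_mul_inv, show (π*t*|x|)^2 = (π*t)^2 * |x|^2 by ring, mul_inv, ← inv_pow]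
          ring
  have hz : ∀ n : ℤ, n ∉ Finset.Icc (-⌊t⌋) ⌊t⌋ →
      FourierTransform.fourier f n * fourier n ((0:ℝ) : UnitAddCircle) = 0 := by
    intro n hn
    rw [Finset.mem_Icc] at hn
    push_neg at hn
    have hbig : t < |(n:ℝ)| := by
      rcases le_or_gt (-⌊t⌋) n with h | h
      · have h2 := hn h
        have h3 : ((⌊t⌋:ℝ) + 1) ≤ (n:ℝ) := by exact_mod_cast h2
        have h4 := Int.lt_floor_add_one t
        have : t < (n:ℝ) := by linarith
        rw [abs_of_pos (lt_trans ht this)]; exact this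
      · have h3 : (n:ℝ) ≤ -(⌊t⌋:ℝ) - 1 := by
          have h' : n ≤ -⌊t⌋ - 1 := by omega
          exact_mod_cast h'
        have h4 := Int.lt_floor_add_one t
        have h5 : (n:ℝ) < -t := by linarith
        rw [abs_of_neg (by linarith : (n:ℝ) < 0)]; linarith
    have hhat0 : fourierHat (fun x => φ x) (-(((n:ℝ))/t)) = 0 := by
      apply hhat_supp
      intro hmem
      rw [Set.mem_Icc] at hmem
      have habs : |(n:ℝ)/t| ≤ 1 := abs_le.mpr ⟨by linarith [hmem.2], by linarith [hmem.1]⟩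
      rw [abs_div, abs_of_pos ht, div_le_one ht] at habs
      linarith
    rw [hA, hhat0, mul_zero, zero_mul]
  have hP := Real.tsum_eq_tsum_fourier_of_rpow_decay hc one_lt_two hfO hFf 0
  have hodd : ∑ k ∈ Finset.Icc (-⌊t⌋) ⌊t⌋,
      (t:ℂ)⁻¹ * fourierHat (fun x => φ x) ((k:ℝ)/t) * ((Real.sin ((k:ℝ)*θ) : ℝ) * Complex.I) = 0 := by
    refine Finset.sum_involution (fun k _ => -k) ?_ ?_ ?_ ?_
    · intro k hk
      have h1 : ((-k : ℤ) : ℝ)/t = -((k:ℝ)/t) := by push_cast; ring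
      have h2 : ((-k : ℤ) : ℝ)*θ = -((k:ℝ)*θ) := by push_cast; ring
      rw [h1, h2, hat_even _ hφ_even, Real.sin_neg]
      push_cast; ring
    · intro k hk hne heq
      apply hne
      have h' : -k = k := by simpa using heq
      have hk0 : k = 0 := by omega
      simp [hk0]
    · intro k hk
      show -k ∈ Finset.Icc (-⌊t⌋) ⌊t⌋
      simp only [Finset.mem_Icc] at hk ⊢
      omega
    · intro k hk; simp
  have hterm : ∀ k : ℤ, Complex.exp (-(Complex.I * ((k:ℝ):ℂ) * (θ:ℂ)))
      = ((Real.cos ((k:ℝ)*θ) : ℝ) : ℂ) - ((Real.sin ((k:ℝ)*θ) : ℝ) : ℂ) * Complex.I := by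
    intro k
    rw [show -(Complex.I * ((k:ℝ):ℂ) * (θ:ℂ)) = ((-((k:ℝ)*θ) : ℝ) : ℂ) * Complex.I by
        push_cast; ring,
      Complex.exp_mul_I, ← Complex.ofReal_cos, ← Complex.ofReal_sin,
      Real.cos_neg, Real.sin_neg]
    push_cast; ring
  calc ((∑' n : ℤ, φ ((θ - 2 * π * n) * t) : ℝ) : ℂ)
      = ∑' n : ℤ, f ((0:ℝ) + n) := by
        rw [Complex.ofReal_tsum]
        exact tsum_congr fun n => by simp [hf]
    _ = ∑' n : ℤ, FourierTransform.fourier f n * fourier n ((0:ℝ) : UnitAddCircle) := hP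
    _ = ∑ k ∈ Finset.Icc (-⌊t⌋) ⌊t⌋,
          FourierTransform.fourier f k * fourier k ((0:ℝ):UnitAddCircle) := tsum_eq_sum hz
    _ = ∑ k ∈ Finset.Icc (-⌊t⌋) ⌊t⌋,
          (t:ℂ)⁻¹ * fourierHat (fun x => φ x) ((k:ℝ)/t) *
            Complex.exp (-(Complex.I * ((k:ℝ):ℂ) * (θ:ℂ))) := by
        refine Finset.sum_congr rfl fun k hk => ?_
        have h0 : ((0:ℝ) : UnitAddCircle) = 0 := by norm_cast
        rw [h0, fourier_eval_zero, mul_one, hA (k:ℝ), hat_even _ hφ_even]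
        ring
    _ = ∑ k ∈ Finset.Icc (-⌊t⌋) ⌊t⌋,
          (t : ℂ)⁻¹ * fourierHat (fun x => φ x) ((k:ℝ) / t) * ((Real.cos ((k:ℝ) * θ) : ℝ) : ℂ) := by
        rw [show (∑ k ∈ Finset.Icc (-⌊t⌋) ⌊t⌋,
            (t:ℂ)⁻¹ * fourierHat (fun x => φ x) ((k:ℝ)/t) *
              Complex.exp (-(Complex.I * ((k:ℝ):ℂ) * (θ:ℂ))))
          = ∑ k ∈ Finset.Icc (-⌊t⌋) ⌊t⌋,
            ((t:ℂ)⁻¹ * fourierHat (fun x => φ x) ((k:ℝ)/t) * ((Real.cos ((k:ℝ)*θ) : ℝ) : ℂ)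
              - (t:ℂ)⁻¹ * fourierHat (fun x => φ x) ((k:ℝ)/t) *
                  (((Real.sin ((k:ℝ)*θ) : ℝ) : ℂ) * Complex.I)) from
          Finset.sum_congr rfl fun k hk => by rw [hterm k]; ring]
        rw [Finset.sum_sub_distrib, hodd, sub_zero]


theorem stmt1 (φ : SchwartzMap ℝ ℝ) (hφ_even : ∀ x : ℝ, φ (-x) = φ x)
    (hhat_supp : ∀ k : ℝ, k ∉ Set.Icc (-1 : ℝ) 1 → fourierHat (fun x => φ x) k = 0) :
    (∀ t : ℝ, 0 < t → ∀ lam ∈ Set.Icc (0 : ℝ) 4,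
      ((∑' n : ℤ, φ ((Real.arccos (1 - lam / 2) - 2 * Real.pi * n) * t) : ℝ) : ℂ)
        = ∑ k ∈ Finset.Icc (-⌊t⌋) ⌊t⌋,
            (t : ℂ)⁻¹ * fourierHat (fun x => φ x) (k / t) *
              ((Polynomial.Chebyshev.T ℝ k).eval (1 - lam / 2) : ℝ)) ∧
    (∀ t : ℝ, 0 < t → ∃ P : Polynomial ℝ, P.natDegree ≤ ⌊t⌋.toNat ∧
      ∀ lam ∈ Set.Icc (0 : ℝ) 4,
        (∑' n : ℤ, φ ((Real.arccos (1 - lam / 2) - 2 * Real.pi * n) * t)) = P.eval lam) := by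
  have part1 : ∀ t : ℝ, 0 < t → ∀ lam ∈ Set.Icc (0 : ℝ) 4,
      ((∑' n : ℤ, φ ((Real.arccos (1 - lam / 2) - 2 * Real.pi * n) * t) : ℝ) : ℂ)
        = ∑ k ∈ Finset.Icc (-⌊t⌋) ⌊t⌋,
            (t : ℂ)⁻¹ * fourierHat (fun x => φ x) (k / t) *
              ((Polynomial.Chebyshev.T ℝ k).eval (1 - lam / 2) : ℝ) := by
    intro t ht lam hlam
    rw [Set.mem_Icc] at hlam
    have hcos : Real.cos (Real.arccos (1 - lam / 2)) = 1 - lam / 2 :=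
      Real.cos_arccos (by linarith [hlam.2]) (by linarith [hlam.1])
    rw [key_lemma φ hφ_even hhat_supp t ht (Real.arccos (1 - lam / 2))]
    refine Finset.sum_congr rfl fun k hk => ?_
    have hT' : (Polynomial.Chebyshev.T ℝ k).eval (1 - lam / 2)
        = Real.cos ((k:ℝ) * Real.arccos (1 - lam / 2)) := by
      have h := Polynomial.Chebyshev.T_real_cos (Real.arccos (1 - lam / 2)) k
      rw [hcos] at h
      exact h
    rw [hT']
  refine ⟨part1, ?_⟩
  intro t ht
  refine ⟨∑ k ∈ Finset.Icc (-⌊t⌋) ⌊t⌋,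
    Polynomial.C (t⁻¹ * (fourierHat (fun x => φ x) ((k:ℝ)/t)).re) *
      ((Polynomial.Chebyshev.T ℝ k).comp (Polynomial.C 1 - Polynomial.C (2⁻¹:ℝ) * Polynomial.X)),
    ?_, ?_⟩
  · apply Polynomial.natDegree_sum_le_of_forall_le
    intro k hk
    rw [Finset.mem_Icc] at hk
    refine le_trans (Polynomial.natDegree_C_mul_le _ _) ?_
    refine le_trans Polynomial.natDegree_comp_le ?_
    have hq : (Polynomial.C 1 - Polynomial.C (2⁻¹:ℝ) * Polynomial.X).natDegree ≤ 1 := by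
      refine le_trans (Polynomial.natDegree_sub_le _ _) ?_
      simp [Polynomial.natDegree_C_mul_X (2⁻¹:ℝ) (by norm_num)]
    have hT := chebyshev_natDegree_le k
    have hk' : k.natAbs ≤ ⌊t⌋.toNat := by omega
    calc (Polynomial.Chebyshev.T ℝ k).natDegree *
          (Polynomial.C 1 - Polynomial.C (2⁻¹:ℝ) * Polynomial.X).natDegree
        ≤ k.natAbs * 1 := Nat.mul_le_mul hT hq
      _ ≤ ⌊t⌋.toNat := by omega
  · intro lam hlam
    have h1 := part1 t ht lam hlam
    have h2 := congrArg Complex.re h1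
    rw [Complex.ofReal_re, Complex.re_sum] at h2
    rw [h2, Polynomial.eval_finset_sum]
    refine Finset.sum_congr rfl fun k hk => ?_
    have hre : ((t:ℂ)⁻¹ * fourierHat (fun x => φ x) ((k:ℝ)/t) *
        (((Polynomial.Chebyshev.T ℝ k).eval (1 - lam / 2) : ℝ) : ℂ)).re
        = t⁻¹ * (((Polynomial.Chebyshev.T ℝ k).eval (1 - lam / 2)) *
            (fourierHat (fun x => φ x) ((k:ℝ)/t)).re) := by
      rw [show ((t:ℂ)⁻¹ * fourierHat (fun x => φ x) ((k:ℝ)/t) *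
          (((Polynomial.Chebyshev.T ℝ k).eval (1 - lam / 2) : ℝ) : ℂ))
          = ((t⁻¹ : ℝ) : ℂ) * ((((Polynomial.Chebyshev.T ℝ k).eval (1 - lam / 2) : ℝ) : ℂ) *
              fourierHat (fun x => φ x) ((k:ℝ)/t)) by push_cast; ring,
        Complex.re_ofReal_mul, Complex.re_ofReal_mul]
    rw [hre]
    rw [Polynomial.eval_mul, Polynomial.eval_C, Polynomial.eval_comp]
    have : (Polynomial.C 1 - Polynomial.C (2⁻¹:ℝ) * Polynomial.X).eval lam = 1 - lam / 2 := by
      simp; ring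
    rw [this]
    ring
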